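/- Let B₁ and B₂ be positive definite symmetric real n×n matrices. Then 1/(2·Tr((B₁⁻¹+B₂⁻¹)⁻¹)) ≥ 1/(2·Tr B₁) + 1/(2·Tr B₂). -/

import Mathlib

open Matrix

lemma sym_dot' {n : ℕ} {B : Matrix (Fin n) (Fin n) ℝ} (hB : B.IsHermitian)
    (a b : Fin n → ℝ) : a ⬝ᵥ (B *ᵥ b) = (B *ᵥ a) ⬝ᵥ b := by
  have ht : Bᵀ = B := by simpa using hB.eq
  rw [Matrix.dotProduct_mulVec, ← Matrix.mulVec_transpose, ht]

lemma key_cs' {n : ℕ} {B : Matrix (Fin n) (Fin n) ℝ} (hB : B.PosDef)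
    (y u : Fin n → ℝ) :
    2 * (u ⬝ᵥ y) ≤ y ⬝ᵥ (B *ᵥ y) + u ⬝ᵥ (B⁻¹ *ᵥ u) := by
  set v := B⁻¹ *ᵥ u with hv
  have hBv : B *ᵥ v = u := by
    rw [hv, Matrix.mulVec_mulVec, Matrix.mul_nonsing_inv _ hB.det_pos.ne'.isUnit,
      Matrix.one_mulVec]
  have h0 : 0 ≤ (y - v) ⬝ᵥ (B *ᵥ (y - v)) := by
    simpa using hB.posSemidef.dotProduct_mulVec_nonneg (y - v)
  have hexp : (y - v) ⬝ᵥ (B *ᵥ (y - v)) =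
      y ⬝ᵥ (B *ᵥ y) - y ⬝ᵥ u - (u ⬝ᵥ y) + v ⬝ᵥ u := by
    rw [Matrix.mulVec_sub, dotProduct_sub, sub_dotProduct,
      sub_dotProduct, hBv]
    have h1 : v ⬝ᵥ (B *ᵥ y) = u ⬝ᵥ y := by rw [sym_dot' hB.1, hBv]
    ring_nf
    rw [h1]; ring
  have hcomm : y ⬝ᵥ u = u ⬝ᵥ y := dotProduct_comm _ _
  have hvu : v ⬝ᵥ u = u ⬝ᵥ v := dotProduct_comm _ _
  rw [hexp, hcomm, hvu] at h0
  linarith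

lemma pointwise' {n : ℕ} {B₁ B₂ : Matrix (Fin n) (Fin n) ℝ}
    (h₁ : B₁.PosDef) (h₂ : B₂.PosDef) (t : ℝ) (x : Fin n → ℝ) :
    x ⬝ᵥ ((B₁⁻¹ + B₂⁻¹)⁻¹ *ᵥ x) ≤
      t ^ 2 * (x ⬝ᵥ (B₁ *ᵥ x)) + (1 - t) ^ 2 * (x ⬝ᵥ (B₂ *ᵥ x)) := by
  set S := B₁⁻¹ + B₂⁻¹ with hSdef
  have hS : S.PosDef := h₁.inv.add h₂.inv
  set u := S⁻¹ *ᵥ x with hu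
  have hSu : B₁⁻¹ *ᵥ u + B₂⁻¹ *ᵥ u = x := by
    rw [← Matrix.add_mulVec, ← hSdef, hu, Matrix.mulVec_mulVec,
      Matrix.mul_nonsing_inv _ hS.det_pos.ne'.isUnit, Matrix.one_mulVec]
  have e1 : x ⬝ᵥ (S⁻¹ *ᵥ x) = u ⬝ᵥ x := dotProduct_comm _ _
  have e2 : u ⬝ᵥ x = u ⬝ᵥ (B₁⁻¹ *ᵥ u) + u ⬝ᵥ (B₂⁻¹ *ᵥ u) := by
    rw [← dotProduct_add]
    exact congrArg _ hSu.symm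
  have k1 := key_cs' h₁ (t • x) u
  have k2 := key_cs' h₂ ((1 - t) • x) u
  have s1 : u ⬝ᵥ (t • x) = t * (u ⬝ᵥ x) := by
    rw [dotProduct_smul]; simp [mul_comm]
  have s2 : u ⬝ᵥ ((1 - t) • x) = (1 - t) * (u ⬝ᵥ x) := by
    rw [dotProduct_smul]; simp [mul_comm]
  have q1 : (t • x) ⬝ᵥ (B₁ *ᵥ (t • x)) = t ^ 2 * (x ⬝ᵥ (B₁ *ᵥ x)) := by
    rw [Matrix.mulVec_smul, smul_dotProduct, dotProduct_smul]
    simp; ring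
  have q2 : ((1 - t) • x) ⬝ᵥ (B₂ *ᵥ ((1 - t) • x)) = (1 - t) ^ 2 * (x ⬝ᵥ (B₂ *ᵥ x)) := by
    rw [Matrix.mulVec_smul, smul_dotProduct, dotProduct_smul]
    simp; ring
  rw [s1, q1] at k1
  rw [s2, q2] at k2
  rw [e1]
  linarith [e2, k1, k2]

lemma diag_quad' {n : ℕ} (B : Matrix (Fin n) (Fin n) ℝ) (i : Fin n) :
    (Pi.single i 1 : Fin n → ℝ) ⬝ᵥ (B *ᵥ Pi.single i 1) = B i i := by
  simp [single_dotProduct, Matrix.mulVec_single]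

lemma trace_pos' {n : ℕ} {B : Matrix (Fin n) (Fin n) ℝ} (hn : 0 < n)
    (hB : B.PosDef) : 0 < B.trace := by
  have hpos : ∀ i : Fin n, 0 < B i i := fun i => by
    have hx : (Pi.single i 1 : Fin n → ℝ) ≠ 0 := by
      intro h
      have := congrFun h i
      simp at this
    have := hB.dotProduct_mulVec_pos hx
    simpa [single_dotProduct, Matrix.mulVec_single] using this
  have hne : (Finset.univ : Finset (Fin n)).Nonempty := by
    have : Nonempty (Fin n) := Fin.pos_iff_nonempty.mp hn
    exact Finset.univ_nonempty
  have : 0 < ∑ i, B i i := Finset.sum_pos (fun i _ => hpos i) hne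
  simpa [Matrix.trace, Matrix.diag] using this

theorem stmt2 {n : ℕ} (B₁ B₂ : Matrix (Fin n) (Fin n) ℝ)
    (h₁ : B₁.PosDef) (h₂ : B₂.PosDef) :
    1 / (2 * ((B₁⁻¹ + B₂⁻¹)⁻¹).trace) ≥ 1 / (2 * B₁.trace) + 1 / (2 * B₂.trace) := by
  rcases Nat.eq_zero_or_pos n with hn | hn
  · subst hn
    simp [Matrix.trace]
  · set a := B₁.trace with hadef
    set b := B₂.trace with hbdef
    set c := ((B₁⁻¹ + B₂⁻¹)⁻¹).trace with hcdef
    have ha : 0 < a := trace_pos' hn h₁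
    have hb : 0 < b := trace_pos' hn h₂
    have hc : 0 < c := trace_pos' hn (h₁.inv.add h₂.inv).inv
    have hab : 0 < a + b := by linarith
    set t : ℝ := b / (a + b) with htdef
    have hsum : c ≤ t ^ 2 * a + (1 - t) ^ 2 * b := by
      have hdiag : ∀ i : Fin n, ((B₁⁻¹ + B₂⁻¹)⁻¹) i i ≤
          t ^ 2 * B₁ i i + (1 - t) ^ 2 * B₂ i i := fun i => by
        have := pointwise' h₁ h₂ t (Pi.single i 1 : Fin n → ℝ)
        simpa [diag_quad'] using this
      have : ∑ i, ((B₁⁻¹ + B₂⁻¹)⁻¹) i i ≤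
          ∑ i, (t ^ 2 * B₁ i i + (1 - t) ^ 2 * B₂ i i) :=
        Finset.sum_le_sum fun i _ => hdiag i
      rw [Finset.sum_add_distrib, ← Finset.mul_sum, ← Finset.mul_sum] at this
      simpa [Matrix.trace, Matrix.diag, hadef, hbdef, hcdef] using this
    have hkey : c ≤ a * b / (a + b) := by
      have he : t ^ 2 * a + (1 - t) ^ 2 * b = a * b / (a + b) := by
        rw [htdef]; field_simp; ring
      linarith [he ▸ hsum]
    have hkey2 : c * (a + b) ≤ a * b := (le_div_iff₀ hab).mp hkey
    rw [ge_iff_le, div_add_div _ _ (by positivity) (by positivity),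
      div_le_div_iff₀ (by positivity) (by positivity)]
    nlinarith
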